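/- arXiv:2512.24291 — 6 statements merged into one kernel-verified Lean document; each statement's English description precedes it below -/
import Mathlib

section
/- Let h : ℝ^d → ℝ be differentiable with L_h-Lipschitz gradient, satisfying the μ_h-PŁ condition (μ_h > 0) with attained infimum h*. Let {x^k} be the AC-GM iterates with scale parameter α > 1 and initial Lipschitz factor L_0 > 0, and assume ∇h(x^k) ≠ 0 for every k so that all iterates are well defined. Set β := (α+1)/2, m_h := ⌈log_β(max{L_0, L_h}/L_0)⌉₊ (the smallest nonnegative integer at least this logarithm), p := μ_h(α−1)/(2α² max{L_0, L_h}), C̄ := max{ L_h³/(μ_h α² L_0²), L_h²/(μ_h α² L_0), μ_h L_h/(α² L_0²), μ_h/(α² L_0) }, and C_h := (1+C̄)^{m_h}/(1−p)^{m_h}. Then 0 < p < 1 and for every k ≥ 0, h(x^{k+1}) − h* ≤ C_h (1−p)^{k+1} (h(x^0) − h*). -/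
open Real MeasureTheory intervalIntegral

variable {F : Type*} [NormedAddCommGroup F] [InnerProductSpace ℝ F] [CompleteSpace F]

lemma path_hasDerivAt (h : F → ℝ) (hdiff : Differentiable ℝ h) (u w : F) (t : ℝ) :
    HasDerivAt (fun s : ℝ => h (u + s • w))
      (inner ℝ (gradient h (u + t • w)) w : ℝ) t := by
  have hψ : HasDerivAt (fun s : ℝ => u + s • w) w t := by
    simpa using ((hasDerivAt_id t).smul_const w).const_add u
  have hg := hasGradientAt_iff_hasFDerivAt.mp (hdiff (u + t • w)).hasGradientAt
  have := hg.comp_hasDerivAt t hψ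
  exact this

lemma descent_lemma (h : F → ℝ) (hdiff : Differentiable ℝ h) (Lh : ℝ) (hLh : 0 ≤ Lh)
    (hLip : ∀ u v, ‖gradient h u - gradient h v‖ ≤ Lh * ‖u - v‖) (u v : F) :
    h v ≤ h u + (inner ℝ (gradient h u) (v - u) : ℝ) + Lh / 2 * ‖v - u‖ ^ 2 := by
  set w := v - u with hw
  have hgradcont : Continuous (gradient h) := by
    have : LipschitzWith Lh.toNNReal (gradient h) := by
      apply LipschitzWith.of_dist_le_mul
      intro a b
      rw [dist_eq_norm, dist_eq_norm, Real.coe_toNNReal _ hLh]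
      exact hLip a b
    exact this.continuous
  have hφ' : Continuous fun t : ℝ => (inner ℝ (gradient h (u + t • w)) w : ℝ) := by
    exact (Continuous.inner ((hgradcont.comp (by continuity))) continuous_const)
  have hint : ∫ t in (0:ℝ)..1, (inner ℝ (gradient h (u + t • w)) w : ℝ) =
      h (u + (1:ℝ) • w) - h (u + (0:ℝ) • w) := by
    have := intervalIntegral.integral_eq_sub_of_hasDerivAt
      (f := fun s : ℝ => h (u + s • w))
      (f' := fun t : ℝ => (inner ℝ (gradient h (u + t • w)) w : ℝ))
      (a := 0) (b := 1)
      (fun t _ => path_hasDerivAt h hdiff u w t) (hφ'.intervalIntegrable 0 1)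
    simpa using this
  have hbound : ∫ t in (0:ℝ)..1, (inner ℝ (gradient h (u + t • w)) w : ℝ) ≤
      ∫ t in (0:ℝ)..1, ((inner ℝ (gradient h u) w : ℝ) + Lh * t * ‖w‖ ^ 2) := by
    apply intervalIntegral.integral_mono_on (by norm_num)
      (hφ'.intervalIntegrable 0 1)
      ((continuous_const.add ((continuous_const.mul continuous_id').mul
        continuous_const)).intervalIntegrable 0 1)
    intro t ht
    have h1 : (inner ℝ (gradient h (u + t • w)) w : ℝ) - (inner ℝ (gradient h u) w : ℝ)
        = (inner ℝ (gradient h (u + t • w) - gradient h u) w : ℝ) := by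
      rw [inner_sub_left]
    have h2 : (inner ℝ (gradient h (u + t • w) - gradient h u) w : ℝ) ≤
        ‖gradient h (u + t • w) - gradient h u‖ * ‖w‖ := real_inner_le_norm _ _
    have h3 : ‖gradient h (u + t • w) - gradient h u‖ ≤ Lh * (t * ‖w‖) := by
      have := hLip (u + t • w) u
      simpa [norm_smul, Real.norm_eq_abs, abs_of_nonneg ht.1, mul_assoc] using this
    have h5 : ‖gradient h (u + t • w) - gradient h u‖ * ‖w‖ ≤ Lh * (t * ‖w‖) * ‖w‖ :=
      mul_le_mul_of_nonneg_right h3 (norm_nonneg w)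
    have h6 : Lh * (t * ‖w‖) * ‖w‖ = Lh * t * ‖w‖ ^ 2 := by ring
    show _ ≤ (inner ℝ (gradient h u) w : ℝ) + Lh * t * ‖w‖ ^ 2
    linarith
  have hrhs : ∫ t in (0:ℝ)..1, ((inner ℝ (gradient h u) w : ℝ) + Lh * t * ‖w‖ ^ 2)
      = (inner ℝ (gradient h u) w : ℝ) + Lh / 2 * ‖w‖ ^ 2 := by
    have heq : ∀ t : ℝ, (inner ℝ (gradient h u) w : ℝ) + Lh * t * ‖w‖ ^ 2
        = (inner ℝ (gradient h u) w : ℝ) + (Lh * ‖w‖ ^ 2) * t := by intro t; ring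
    simp only [heq]
    rw [intervalIntegral.integral_add intervalIntegrable_const
      ((continuous_mul_left (Lh * ‖w‖ ^ 2)).intervalIntegrable 0 1),
      intervalIntegral.integral_const_mul, integral_id]
    simp; ring
  rw [hint, hrhs] at hbound
  simp only [one_smul, zero_smul, add_zero] at hbound
  have huw : u + w = v := by rw [hw]; abel
  rw [huw] at hbound
  linarith
lemma good_step (α γ Λ L' μ G gap gap' : ℝ) (hα : 1 < α) (hγ : 0 < γ) (hγΛ : γ ≤ Λ)
    (hL' : L' ≤ (α + 1) / 2 * γ) (hG : 2 * μ * gap ≤ G) (hμ : 0 < μ) (hgap : 0 ≤ gap)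
    (hstep : gap' = gap - 1 / (α * γ) * G + L' / 2 * ((1 / (α * γ)) ^ 2 * G)) :
    gap' ≤ (1 - μ * (α - 1) / (2 * α ^ 2 * Λ)) * gap := by
  have hΛ : 0 < Λ := lt_of_lt_of_le hγ hγΛ
  have hα0 : 0 < α := by linarith
  have hαγ : 0 < α * γ := by positivity
  have hG0 : 0 ≤ G := le_trans (by positivity) hG
  have key : (μ * (α - 1) / (2 * α ^ 2 * Λ)) * gap ≤ 1 / (α * γ) * G - L' / 2 * ((1 / (α * γ)) ^ 2 * G) := by
    have c1 : L' / 2 * ((1 / (α * γ)) ^ 2 * G) ≤ ((α + 1) / 2 * γ) / 2 * ((1 / (α * γ)) ^ 2 * G) := by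
      apply mul_le_mul_of_nonneg_right _ (by positivity)
      linarith
    have c2 : ((α + 1) / 2 * γ) / 2 * ((1 / (α * γ)) ^ 2 * G) = (α + 1) / (4 * α) * (1 / (α * γ) * G) := by
      field_simp; ring
    have c3 : 1 / (α * γ) * G - (α + 1) / (4 * α) * (1 / (α * γ) * G) = (3 * α - 1) / (4 * α) * (1 / (α * γ) * G) := by
      field_simp; ring
    have c4 : (μ * (α - 1) / (2 * α ^ 2 * Λ)) * gap ≤ (3 * α - 1) / (4 * α) * (1 / (α * γ) * G) := by
      have c5 : (3 * α - 1) / (4 * α) * (1 / (α * γ) * G) ≥ (3 * α - 1) / (4 * α) * (1 / (α * Λ) * G) := by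
        apply mul_le_mul_of_nonneg_left _ (div_nonneg (by linarith) (by linarith))
        apply mul_le_mul_of_nonneg_right _ hG0
        apply one_div_le_one_div_of_le hαγ
        exact mul_le_mul_of_nonneg_left hγΛ hα0.le
      have c6 : (μ * (α - 1) / (2 * α ^ 2 * Λ)) * gap ≤ (3 * α - 1) / (4 * α) * (1 / (α * Λ) * G) := by
        rw [div_mul_eq_mul_div, div_le_iff₀ (by positivity)]
        have : (3 * α - 1) / (4 * α) * (1 / (α * Λ) * G) * (2 * α ^ 2 * Λ)
            = (3 * α - 1) / 2 * α ^2 / α ^ 2 * G := by field_simp; ring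
        rw [this]
        have : (3 * α - 1) / 2 * α ^ 2 / α ^ 2 = (3 * α - 1) / 2 := by
          field_simp
        rw [this]
        nlinarith [hG, hgap, hμ]
      linarith
    linarith [c1, c2.le, c3, c4]
  rw [hstep, sub_mul, one_mul]; linarith [key]

lemma bad_step (α γ L₀ L' Lh G gap gap' Cbar : ℝ) (hα : 1 < α) (hL₀ : 0 < L₀)
    (hγ : L₀ ≤ γ) (hL'Lh : L' ≤ Lh) (hLh : 0 < Lh) (hGle : G ≤ 2 * Lh * gap) (hG0 : 0 ≤ G)
    (hCbar : Lh ^ 2 / (α ^ 2 * L₀ ^ 2) ≤ Cbar)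
    (hstep : gap' = gap - 1 / (α * γ) * G + L' / 2 * ((1 / (α * γ)) ^ 2 * G)) :
    gap' ≤ (1 + Cbar) * gap := by
  have hγ0 : 0 < γ := lt_of_lt_of_le hL₀ hγ
  have hα0 : 0 < α := by linarith
  have hgap : 0 ≤ gap := by nlinarith
  have hq : (1 / (α * γ)) ^ 2 ≤ (1 / (α * L₀)) ^ 2 := by
    apply pow_le_pow_left₀ (by positivity)
    apply one_div_le_one_div_of_le (by positivity)
    exact mul_le_mul_of_nonneg_left hγ hα0.le
  have c1 : L' / 2 * ((1 / (α * γ)) ^ 2 * G) ≤ Lh / 2 * ((1 / (α * L₀)) ^ 2 * G) := by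
    apply mul_le_mul (by linarith) (mul_le_mul_of_nonneg_right hq hG0) (by positivity)
      (by positivity)
  have c2 : Lh / 2 * ((1 / (α * L₀)) ^ 2 * G) ≤ Lh / 2 * ((1 / (α * L₀)) ^ 2 * (2 * Lh * gap)) := by
    apply mul_le_mul_of_nonneg_left (mul_le_mul_of_nonneg_left hGle (by positivity)) (by positivity)
  have c3 : Lh / 2 * ((1 / (α * L₀)) ^ 2 * (2 * Lh * gap)) = Lh ^ 2 / (α ^ 2 * L₀ ^ 2) * gap := by
    field_simp
  have c4 : Lh ^ 2 / (α ^ 2 * L₀ ^ 2) * gap ≤ Cbar * gap :=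
    mul_le_mul_of_nonneg_right hCbar hgap
  have c5 : 0 ≤ 1 / (α * γ) * G := by positivity
  rw [hstep, add_mul, one_mul]
  linarith

set_option maxHeartbeats 1000000 in
/-- AC-GM linear convergence under the PŁ condition.
Let `h : ℝ^d → ℝ` be differentiable with `Lh`-Lipschitz gradient, `μh`-PŁ with attained
infimum `hstar`.  Let `x` be the AC-GM iterates with scale `α > 1` and initial Lipschitz
factor `L₀ > 0`, with nonzero gradients.  Then `0 < p < 1` and
`h (x (k+1)) - hstar ≤ C_h (1-p)^(k+1) (h (x 0) - hstar)` for all `k`. -/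
theorem acgm_linear_rate
    {d : ℕ} (h : EuclideanSpace ℝ (Fin d) → ℝ) (hdiff : Differentiable ℝ h)
    (Lh μh : ℝ) (hμ : 0 < μh)
    (hLip : ∀ u v, ‖gradient h u - gradient h v‖ ≤ Lh * ‖u - v‖)
    (hstar : ℝ) (hlow : ∀ x, hstar ≤ h x) (hatt : ∃ x, h x = hstar)
    (hPL : ∀ x, 2 * μh * (h x - hstar) ≤ ‖gradient h x‖ ^ 2)
    (α L₀ : ℝ) (hα : 1 < α) (hL₀ : 0 < L₀)
    (x : ℕ → EuclideanSpace ℝ (Fin d)) (L γ : ℕ → ℝ)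
    (hL0 : L 0 = L₀)
    (hγ : ∀ k : ℕ, γ (k + 1) =
      (Finset.range (k + 1)).sup' (Finset.nonempty_range_iff.mpr (Nat.succ_ne_zero k)) L)
    (hx : ∀ k : ℕ, x (k + 1) = x k - (1 / (α * γ (k + 1))) • gradient h (x k))
    (hL : ∀ k : ℕ, L (k + 1) =
      2 * (h (x (k + 1)) - h (x k)
        - (inner ℝ (gradient h (x k)) (x (k + 1) - x k) : ℝ)) / ‖x (k + 1) - x k‖ ^ 2)
    (hgrad : ∀ k : ℕ, gradient h (x k) ≠ 0)
    (p Cbar Ch : ℝ) (mh : ℕ)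
    (hp : p = μh * (α - 1) / (2 * α ^ 2 * max L₀ Lh))
    (hmh : mh = ⌈Real.logb ((α + 1) / 2) (max L₀ Lh / L₀)⌉₊)
    (hCbar : Cbar = max (max (Lh ^ 3 / (μh * α ^ 2 * L₀ ^ 2)) (Lh ^ 2 / (μh * α ^ 2 * L₀)))
      (max (μh * Lh / (α ^ 2 * L₀ ^ 2)) (μh / (α ^ 2 * L₀))))
    (hCh : Ch = (1 + Cbar) ^ mh / (1 - p) ^ mh) :
    0 < p ∧ p < 1 ∧
      ∀ k : ℕ, h (x (k + 1)) - hstar ≤ Ch * (1 - p) ^ (k + 1) * (h (x 0) - hstar) := by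
  classical
  obtain ⟨xs, hxs⟩ := hatt
  have hα0 : (0:ℝ) < α := by linarith
  -- gradient vanishes at the minimizer
  have hmin : IsLocalMin h xs :=
    Filter.Eventually.of_forall fun y => by rw [hxs]; exact hlow y
  have hgxs : gradient h xs = 0 := by
    unfold gradient
    rw [hmin.fderiv_eq_zero, map_zero]
  -- Lh is positive
  have hLh : 0 < Lh := by
    have h1 : 0 < ‖gradient h (x 0)‖ := norm_pos_iff.mpr (hgrad 0)
    have h2 := hLip (x 0) xs
    rw [hgxs, sub_zero] at h2
    nlinarith [norm_nonneg (x 0 - xs)]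
  have hdesc := descent_lemma h hdiff Lh hLh.le hLip
  have hgap0 : ∀ u, 0 ≤ h u - hstar := fun u => sub_nonneg.mpr (hlow u)
  -- gradient norm bound
  have hgsq : ∀ u, ‖gradient h u‖ ^ 2 ≤ 2 * Lh * (h u - hstar) := by
    intro u
    have hd := hdesc u (u - (1 / Lh) • gradient h u)
    rw [sub_sub_cancel_left, inner_neg_right, real_inner_smul_right,
      real_inner_self_eq_norm_sq, norm_neg, norm_smul, Real.norm_eq_abs,
      abs_of_nonneg (by positivity : (0:ℝ) ≤ 1 / Lh), mul_pow] at hd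
    have hlo := hlow (u - (1 / Lh) • gradient h u)
    have e1 : Lh / 2 * ((1 / Lh) ^ 2 * ‖gradient h u‖ ^ 2)
        = 1 / (2 * Lh) * ‖gradient h u‖ ^ 2 := by field_simp
    rw [e1] at hd
    have e2 : 1 / Lh * ‖gradient h u‖ ^ 2 - 1 / (2 * Lh) * ‖gradient h u‖ ^ 2
        = 1 / (2 * Lh) * ‖gradient h u‖ ^ 2 := by field_simp; ring
    have h3 : 1 / (2 * Lh) * ‖gradient h u‖ ^ 2 ≤ h u - hstar := by linarith
    have h4 := mul_le_mul_of_nonneg_left h3 (by positivity : (0:ℝ) ≤ 2 * Lh)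
    have e3 : 2 * Lh * (1 / (2 * Lh) * ‖gradient h u‖ ^ 2) = ‖gradient h u‖ ^ 2 := by
      field_simp
    linarith [h4, e3.le, e3.ge]
  -- μh ≤ Lh
  have hμLh : μh ≤ Lh := by
    have h1 := hPL (x 0); have h2 := hgsq (x 0)
    have h3 : 0 < ‖gradient h (x 0)‖ ^ 2 := pow_pos (norm_pos_iff.mpr (hgrad 0)) 2
    have h4 : 0 < h (x 0) - hstar := by nlinarith
    nlinarith
  set Λ : ℝ := max L₀ Lh with hΛdef
  have hΛL₀ : L₀ ≤ Λ := le_max_left _ _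
  have hΛLh : Lh ≤ Λ := le_max_right _ _
  have hΛ0 : 0 < Λ := lt_of_lt_of_le hL₀ hΛL₀
  have hμΛ : μh ≤ Λ := hμLh.trans hΛLh
  have hp0 : 0 < p := by
    rw [hp]; exact div_pos (by nlinarith) (by positivity)
  have hp1 : p < 1 := by
    rw [hp, div_lt_one (by positivity)]
    have e1 : μh * (α - 1) ≤ Λ * (α - 1) :=
      mul_le_mul_of_nonneg_right hμΛ (by linarith)
    have e2 : Λ * (α - 1) < Λ * (2 * α ^ 2) := by
      apply mul_lt_mul_of_pos_left _ hΛ0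
      nlinarith
    calc μh * (α - 1) ≤ Λ * (α - 1) := e1
      _ < Λ * (2 * α ^ 2) := e2
      _ = 2 * α ^ 2 * Λ := by ring
  have h1p : 0 < 1 - p := by linarith
  -- γ facts
  have hγL₀ : ∀ k, L₀ ≤ γ (k + 1) := by
    intro k
    rw [hγ k]
    calc L₀ = L 0 := hL0.symm
      _ ≤ _ := Finset.le_sup' L (Finset.mem_range.mpr (Nat.succ_pos k))
  have hγpos : ∀ k, 0 < γ (k + 1) := fun k => lt_of_lt_of_le hL₀ (hγL₀ k)
  -- step geometry
  have hδ : ∀ k, x (k + 1) - x k = -((1 / (α * γ (k + 1))) • gradient h (x k)) := by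
    intro k; rw [hx k, sub_sub_cancel_left]
  have hδnorm : ∀ k, ‖x (k + 1) - x k‖ ^ 2
      = (1 / (α * γ (k + 1))) ^ 2 * ‖gradient h (x k)‖ ^ 2 := by
    intro k
    rw [hδ k, norm_neg, norm_smul, mul_pow, Real.norm_eq_abs, sq_abs]
  have hδinner : ∀ k, (inner ℝ (gradient h (x k)) (x (k + 1) - x k) : ℝ)
      = -(1 / (α * γ (k + 1)) * ‖gradient h (x k)‖ ^ 2) := by
    intro k
    rw [hδ k, inner_neg_right, real_inner_smul_right, real_inner_self_eq_norm_sq]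
  have hδpos : ∀ k, 0 < ‖x (k + 1) - x k‖ ^ 2 := by
    intro k
    rw [hδnorm k]
    exact mul_pos (pow_pos (one_div_pos.mpr (mul_pos hα0 (hγpos k))) 2)
      (pow_pos (norm_pos_iff.mpr (hgrad k)) 2)
  -- per-step identity
  have hstep : ∀ k, h (x (k + 1)) - hstar = (h (x k) - hstar)
      - 1 / (α * γ (k + 1)) * ‖gradient h (x k)‖ ^ 2
      + L (k + 1) / 2 * ((1 / (α * γ (k + 1))) ^ 2 * ‖gradient h (x k)‖ ^ 2) := by
    intro k
    have hLk := hL k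
    rw [hδinner k, hδnorm k] at hLk
    rw [eq_div_iff (ne_of_gt (mul_pos (pow_pos (one_div_pos.mpr (mul_pos hα0 (hγpos k))) 2)
        (pow_pos (norm_pos_iff.mpr (hgrad k)) 2)))] at hLk
    linear_combination (-1/2 : ℝ) * hLk
  -- local curvature below Lh
  have hLleLh : ∀ k, L (k + 1) ≤ Lh := by
    intro k
    have hd := hdesc (x k) (x (k + 1))
    rw [hL k, div_le_iff₀ (hδpos k)]
    linarith
  have hγΛ : ∀ k, γ (k + 1) ≤ Λ := by
    intro k
    rw [hγ k]
    apply Finset.sup'_le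
    intro i _
    match i with
    | 0 => rw [hL0]; exact hΛL₀
    | Nat.succ j => exact le_trans (hLleLh j) hΛLh
  have hγ1 : γ 1 = L₀ := by
    refine le_antisymm ?_ (hγL₀ 0)
    rw [hγ 0]
    apply Finset.sup'_le
    intro i hi
    rw [Nat.lt_one_iff.mp (Finset.mem_range.mp hi), hL0]
  have hγmono : ∀ k, γ (k + 1) ≤ γ (k + 2) := by
    intro k
    rw [hγ k, hγ (k + 1)]
    apply Finset.sup'_le
    intro i hi
    exact Finset.le_sup' L (Finset.mem_range.mpr ((Finset.mem_range.mp hi).trans (Nat.lt_succ_self _)))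
  have hLγsucc : ∀ k, L (k + 1) ≤ γ (k + 2) := by
    intro k
    rw [hγ (k + 1)]
    exact Finset.le_sup' L (Finset.mem_range.mpr (Nat.lt_succ_self _))
  -- bad-step counter
  set β : ℝ := (α + 1) / 2 with hβdef
  have hβ1 : 1 < β := by rw [hβdef]; linarith
  have hβ0 : 0 < β := by linarith
  set P : ℕ → Prop := fun i => β * γ (i + 1) < L (i + 1) with hPdef
  set b : ℕ → ℕ := fun k => ((Finset.range k).filter P).card with hbdef
  have hcount : ∀ k, L₀ * β ^ b k ≤ γ (k + 1) := by
    intro k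
    induction k with
    | zero =>
      have : b 0 = 0 := by simp [hbdef]
      rw [this, pow_zero, mul_one, hγ1]
    | succ k ih =>
      by_cases hbk : P k
      · have hcard : b (k + 1) = b k + 1 := by
          rw [hbdef]
          simp only []
          rw [Finset.range_add_one, Finset.filter_insert, if_pos hbk,
            Finset.card_insert_of_notMem (by simp)]
        rw [hcard, pow_succ, ← mul_assoc]
        have e1 : L₀ * β ^ b k * β ≤ γ (k + 1) * β :=
          mul_le_mul_of_nonneg_right ih hβ0.le
        have e2 : γ (k + 1) * β ≤ L (k + 1) := by
          rw [mul_comm]; exact le_of_lt hbk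
        exact le_trans (le_trans e1 e2) (hLγsucc k)
      · have hcard : b (k + 1) = b k := by
          rw [hbdef]
          simp only []
          rw [Finset.range_add_one, Finset.filter_insert, if_neg hbk]
        rw [hcard]
        exact le_trans ih (hγmono k)
  have hbmh : ∀ k, b k ≤ mh := by
    intro k
    have h1 : L₀ * β ^ b k ≤ Λ := (hcount k).trans (hγΛ k)
    have h2 : (β : ℝ) ^ b k ≤ Λ / L₀ := by
      rw [le_div_iff₀ hL₀]; linarith [h1]
    have h3 : (b k : ℝ) ≤ Real.logb β (Λ / L₀) := by
      rw [Real.le_logb_iff_rpow_le hβ1 (by positivity), Real.rpow_natCast]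
      exact h2
    calc b k = ⌈(b k : ℝ)⌉₊ := (Nat.ceil_natCast _).symm
      _ ≤ ⌈Real.logb β (Λ / L₀)⌉₊ := Nat.ceil_mono h3
      _ = mh := hmh.symm
  -- Cbar bounds
  have hCb : Lh ^ 2 / (α ^ 2 * L₀ ^ 2) ≤ Cbar := by
    have e1 : Lh ^ 2 / (α ^ 2 * L₀ ^ 2) ≤ Lh ^ 3 / (μh * α ^ 2 * L₀ ^ 2) := by
      rw [div_le_div_iff₀ (by positivity) (by positivity)]
      have := mul_le_mul_of_nonneg_right hμLh
        (show (0:ℝ) ≤ Lh ^ 2 * (α ^ 2 * L₀ ^ 2) by positivity)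
      nlinarith [this]
    rw [hCbar]
    exact le_trans e1 (le_trans (le_max_left _ _) (le_max_left _ _))
  have hCb0 : 0 ≤ Cbar := le_trans (by positivity) hCb
  -- per-step contraction bounds
  have hgoodk : ∀ k, L (k + 1) ≤ β * γ (k + 1) →
      h (x (k + 1)) - hstar ≤ (1 - p) * (h (x k) - hstar) := by
    intro k hk
    have := good_step α (γ (k + 1)) Λ (L (k + 1)) μh (‖gradient h (x k)‖ ^ 2)
      (h (x k) - hstar) (h (x (k + 1)) - hstar) hα (hγpos k) (hγΛ k)
      (by rw [← hβdef]; linarith [hk]) (hPL (x k)) hμ (hgap0 _) (hstep k)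
    rw [hp]
    exact this
  have hbadk : ∀ k, h (x (k + 1)) - hstar ≤ (1 + Cbar) * (h (x k) - hstar) := by
    intro k
    exact bad_step α (γ (k + 1)) L₀ (L (k + 1)) Lh (‖gradient h (x k)‖ ^ 2)
      (h (x k) - hstar) (h (x (k + 1)) - hstar) Cbar hα hL₀ (hγL₀ k) (hLleLh k) hLh
      (hgsq (x k)) (by positivity) hCb (hstep k)
  -- main induction
  have hfact : (1 + Cbar) = (1 + Cbar) / (1 - p) * (1 - p) :=
    (div_mul_cancel₀ _ (ne_of_gt h1p)).symm
  have hr1 : 1 ≤ (1 + Cbar) / (1 - p) := by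
    rw [le_div_iff₀ h1p]; linarith
  have hr0 : 0 ≤ (1 + Cbar) / (1 - p) := by linarith
  have hmain : ∀ k, h (x (k + 1)) - hstar ≤
      ((1 + Cbar) / (1 - p)) ^ b (k + 1) * ((1 - p) ^ (k + 1) * (h (x 0) - hstar)) := by
    intro k
    induction k with
    | zero =>
      by_cases hb0 : P 0
      · have hcard : b 1 = 1 := by
          rw [hbdef]; simp only []
          rw [Finset.range_add_one, Finset.filter_insert, if_pos hb0]
          simp
        rw [hcard, pow_one, pow_one]
        calc h (x 1) - hstar ≤ (1 + Cbar) * (h (x 0) - hstar) := hbadk 0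
          _ = (1 + Cbar) / (1 - p) * ((1 - p) * (h (x 0) - hstar)) := by
              field_simp
      · have hcard : b 1 = 0 := by
          rw [hbdef]; simp only []
          rw [Finset.range_add_one, Finset.filter_insert, if_neg hb0]
          simp
        rw [hcard, pow_zero, one_mul, pow_one]
        exact hgoodk 0 (le_of_not_gt (by simpa [hPdef] using hb0))
    | succ k ih =>
      by_cases hbk : P (k + 1)
      · have hcard : b (k + 2) = b (k + 1) + 1 := by
          rw [hbdef]; simp only []
          rw [Finset.range_add_one, Finset.filter_insert, if_pos hbk,
            Finset.card_insert_of_notMem (by simp)]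
        have c1 : h (x (k + 2)) - hstar ≤ (1 + Cbar) * (h (x (k + 1)) - hstar) := hbadk (k + 1)
        have c2 : (1 + Cbar) * (h (x (k + 1)) - hstar) ≤
            (1 + Cbar) * (((1 + Cbar) / (1 - p)) ^ b (k + 1) * ((1 - p) ^ (k + 1) * (h (x 0) - hstar))) :=
          mul_le_mul_of_nonneg_left ih (by linarith)
        have c3 : (1 + Cbar) * (((1 + Cbar) / (1 - p)) ^ b (k + 1) * ((1 - p) ^ (k + 1) * (h (x 0) - hstar)))
            = ((1 + Cbar) / (1 - p)) ^ (b (k + 1) + 1) * ((1 - p) ^ (k + 2) * (h (x 0) - hstar)) := by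
          rw [pow_succ, pow_succ]
          field_simp
          ring
        rw [hcard]
        linarith [c1, c2, c3.le, c3.ge]
      · have hcard : b (k + 2) = b (k + 1) := by
          rw [hbdef]; simp only []
          rw [Finset.range_add_one, Finset.filter_insert, if_neg hbk]
        have c1 : h (x (k + 2)) - hstar ≤ (1 - p) * (h (x (k + 1)) - hstar) :=
          hgoodk (k + 1) (le_of_not_gt (by simpa [hPdef] using hbk))
        have c2 : (1 - p) * (h (x (k + 1)) - hstar) ≤
            (1 - p) * (((1 + Cbar) / (1 - p)) ^ b (k + 1) * ((1 - p) ^ (k + 1) * (h (x 0) - hstar))) :=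
          mul_le_mul_of_nonneg_left ih h1p.le
        have c3 : (1 - p) * (((1 + Cbar) / (1 - p)) ^ b (k + 1) * ((1 - p) ^ (k + 1) * (h (x 0) - hstar)))
            = ((1 + Cbar) / (1 - p)) ^ b (k + 1) * ((1 - p) ^ (k + 2) * (h (x 0) - hstar)) := by
          rw [pow_succ]; ring
        rw [hcard]
        linarith [c1, c2, c3.le, c3.ge]
  refine ⟨hp0, hp1, fun k => ?_⟩
  have h1 := hmain k
  have h2 : ((1 + Cbar) / (1 - p)) ^ b (k + 1) ≤ ((1 + Cbar) / (1 - p)) ^ mh :=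
    pow_le_pow_right₀ hr1 (hbmh (k + 1))
  have h3 : 0 ≤ (1 - p) ^ (k + 1) * (h (x 0) - hstar) :=
    mul_nonneg (pow_nonneg h1p.le _) (hgap0 _)
  have h4 := mul_le_mul_of_nonneg_right h2 h3
  have h5 : Ch = ((1 + Cbar) / (1 - p)) ^ mh := by
    rw [hCh, div_pow]
  calc h (x (k + 1)) - hstar
      ≤ ((1 + Cbar) / (1 - p)) ^ b (k + 1) * ((1 - p) ^ (k + 1) * (h (x 0) - hstar)) := h1
    _ ≤ ((1 + Cbar) / (1 - p)) ^ mh * ((1 - p) ^ (k + 1) * (h (x 0) - hstar)) := h4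
    _ = Ch * (1 - p) ^ (k + 1) * (h (x 0) - hstar) := by rw [h5]; ring
end

section
/- Let h : ℝ^d → ℝ be differentiable with L_h-Lipschitz gradient, satisfying the μ_h-PŁ condition (μ_h > 0) with attained infimum h*. Let {x^k} be the AC-GM iterates with scale parameter α = 2 and initial Lipschitz factor L_0 > 0, with ∇h(x^k) ≠ 0 for every k. With m_h := ⌈log_{3/2}(max{L_0, L_h}/L_0)⌉₊, C̄ := max{ L_h³/(4μ_h L_0²), L_h²/(4μ_h L_0), μ_h L_h/(4L_0²), μ_h/(4L_0) }, p := μ_h/(8 max{L_0, L_h}), and C_h := (1+C̄)^{m_h}/(1−p)^{m_h}, it holds for every k ≥ 0 that h(x^{k+1}) − h* ≤ C_h (1 − μ_h/(8 max{L_0, L_h}))^{k+1} (h(x^0) − h*). -/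
open intervalIntegral in
lemma acgm_descent_lemma {d : ℕ} (h : EuclideanSpace ℝ (Fin d) → ℝ)
    (hdiff : Differentiable ℝ h) (Lh : ℝ)
    (hLip : ∀ u v, ‖gradient h u - gradient h v‖ ≤ Lh * ‖u - v‖) (u v : EuclideanSpace ℝ (Fin d)) :
    h v ≤ h u + (inner ℝ (gradient h u) (v - u) : ℝ) + Lh / 2 * ‖v - u‖ ^ 2 := by
  set c : ℝ → EuclideanSpace ℝ (Fin d) := fun t => u + t • (v - u) with hc
  set φ : ℝ → ℝ := fun t => (inner ℝ (gradient h (c t)) (v - u) : ℝ) with hφ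
  have hgradcont : Continuous (gradient h) := by
    rw [Metric.continuous_iff]
    intro b ε hε
    rcases le_or_gt Lh 0 with hL | hL
    · exact ⟨1, one_pos, fun a _ => by
        have := hLip a b
        have h0 : ‖gradient h a - gradient h b‖ ≤ 0 :=
          le_trans this (mul_nonpos_of_nonpos_of_nonneg hL (norm_nonneg _))
        simpa [dist_eq_norm] using lt_of_le_of_lt h0 hε⟩
    · refine ⟨ε / Lh, by positivity, fun a ha => ?_⟩
      have := hLip a b
      rw [dist_eq_norm] at ha ⊢
      calc ‖gradient h a - gradient h b‖ ≤ Lh * ‖a - b‖ := this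
        _ < Lh * (ε / Lh) := by exact mul_lt_mul_of_pos_left ha hL
        _ = ε := by field_simp
  have hccont : Continuous c := by continuity
  have hφcont : Continuous φ := by
    exact (hgradcont.comp hccont).inner continuous_const
  have hderiv : ∀ t : ℝ, HasDerivAt (fun s => h (c s)) (φ t) t := by
    intro t
    have hcder : HasDerivAt c (v - u) t := by
      exact (((hasDerivAt_id t).smul_const (v - u)).const_add u).congr_deriv (one_smul _ _)
    have hgr : HasGradientAt h (gradient h (c t)) (c t) :=
      (hdiff (c t)).hasGradientAt
    have hfd : HasFDerivAt h ((InnerProductSpace.toDual ℝ _) (gradient h (c t))) (c t) := hgr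
    have := hfd.comp_hasDerivAt t hcder
    exact this.congr_deriv (by rw [InnerProductSpace.toDual_apply_apply])
  have hint : IntervalIntegrable φ MeasureTheory.volume 0 1 := hφcont.intervalIntegrable _ _
  have hkey : h (c 1) - h (c 0) = ∫ t in (0:ℝ)..1, φ t :=
    (integral_eq_sub_of_hasDerivAt (fun t _ => hderiv t) hint).symm
  have hc0 : c 0 = u := by simp [c]
  have hc1 : c 1 = v := by simp [c]
  have hbound : ∫ t in (0:ℝ)..1, φ t ≤ ∫ t in (0:ℝ)..1, (φ 0 + Lh * ‖v - u‖ ^ 2 * t) := by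
    apply integral_mono_on (by norm_num) hint
    · exact (continuous_const.add (continuous_const.mul continuous_id)).intervalIntegrable _ _
    · intro t ht
      have ht0 : 0 ≤ t := ht.1
      have h1 : φ t - φ 0 = (inner ℝ (gradient h (c t) - gradient h (c 0)) (v - u) : ℝ) := by
        simp [φ, inner_sub_left]
      have h2 : (inner ℝ (gradient h (c t) - gradient h (c 0)) (v - u) : ℝ)
          ≤ ‖gradient h (c t) - gradient h (c 0)‖ * ‖v - u‖ := real_inner_le_norm _ _
      have h3 : ‖gradient h (c t) - gradient h (c 0)‖ ≤ Lh * (t * ‖v - u‖) := by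
        have := hLip (c t) (c 0)
        have hdist : ‖c t - c 0‖ = t * ‖v - u‖ := by
          simp [c, norm_smul, abs_of_nonneg ht0]
        rwa [hdist] at this
      nlinarith [norm_nonneg (v - u), mul_le_mul_of_nonneg_right h3 (norm_nonneg (v - u))]
  have hval : ∫ t in (0:ℝ)..1, (φ 0 + Lh * ‖v - u‖ ^ 2 * t) = φ 0 + Lh / 2 * ‖v - u‖ ^ 2 := by
    have : ∫ t in (0:ℝ)..1, (φ 0 + Lh * ‖v - u‖ ^ 2 * t)
        = (∫ _t in (0:ℝ)..1, φ 0) + ∫ t in (0:ℝ)..1, Lh * ‖v - u‖ ^ 2 * t := by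
      apply integral_add intervalIntegrable_const
      exact (continuous_const.mul continuous_id).intervalIntegrable _ _
    rw [this, integral_const, integral_const_mul, integral_id]
    norm_num; ring
  have hφ0 : φ 0 = (inner ℝ (gradient h u) (v - u) : ℝ) := by simp [φ, hc0]
  have := hkey
  rw [hc0, hc1] at this
  linarith [hbound.trans_eq hval, this, hφ0 ▸ (le_refl (φ 0))]

set_option maxHeartbeats 1000000 in
/-- AC-GM with `α = 2`: optimal linear rate.
With scale parameter `α = 2`, AC-GM on a `μh`-PŁ function with `Lh`-Lipschitz gradient
satisfies `h (x (k+1)) - hstar ≤ C_h (1 - μh / (8 max{L₀, Lh}))^(k+1) (h (x 0) - hstar)`. -/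
theorem acgm_linear_rate_alpha_two
    {d : ℕ} (h : EuclideanSpace ℝ (Fin d) → ℝ) (hdiff : Differentiable ℝ h)
    (Lh μh : ℝ) (hμ : 0 < μh)
    (hLip : ∀ u v, ‖gradient h u - gradient h v‖ ≤ Lh * ‖u - v‖)
    (hstar : ℝ) (hlow : ∀ x, hstar ≤ h x) (hatt : ∃ x, h x = hstar)
    (hPL : ∀ x, 2 * μh * (h x - hstar) ≤ ‖gradient h x‖ ^ 2)
    (L₀ : ℝ) (hL₀ : 0 < L₀)
    (x : ℕ → EuclideanSpace ℝ (Fin d)) (L γ : ℕ → ℝ)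
    (hL0 : L 0 = L₀)
    (hγ : ∀ k : ℕ, γ (k + 1) =
      (Finset.range (k + 1)).sup' (Finset.nonempty_range_iff.mpr (Nat.succ_ne_zero k)) L)
    (hx : ∀ k : ℕ, x (k + 1) = x k - (1 / (2 * γ (k + 1))) • gradient h (x k))
    (hL : ∀ k : ℕ, L (k + 1) =
      2 * (h (x (k + 1)) - h (x k)
        - (inner ℝ (gradient h (x k)) (x (k + 1) - x k) : ℝ)) / ‖x (k + 1) - x k‖ ^ 2)
    (hgrad : ∀ k : ℕ, gradient h (x k) ≠ 0)
    (p Cbar Ch : ℝ) (mh : ℕ)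
    (hp : p = μh / (8 * max L₀ Lh))
    (hmh : mh = ⌈Real.logb (3 / 2) (max L₀ Lh / L₀)⌉₊)
    (hCbar : Cbar = max (max (Lh ^ 3 / (4 * μh * L₀ ^ 2)) (Lh ^ 2 / (4 * μh * L₀)))
      (max (μh * Lh / (4 * L₀ ^ 2)) (μh / (4 * L₀))))
    (hCh : Ch = (1 + Cbar) ^ mh / (1 - p) ^ mh) :
    ∀ k : ℕ, h (x (k + 1)) - hstar ≤
      Ch * (1 - μh / (8 * max L₀ Lh)) ^ (k + 1) * (h (x 0) - hstar) := by
  classical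
  have hdesc := acgm_descent_lemma h hdiff Lh hLip
  set M : ℝ := max L₀ Lh with hM
  -- gradient at x 0 is nonzero
  have hg0 : 0 < ‖gradient h (x 0)‖ := norm_pos_iff.mpr (hgrad 0)
  -- Lh is positive
  have hLhpos : 0 < Lh := by
    by_contra hcon
    push_neg at hcon
    set g0 := gradient h (x 0) with hg0def
    set t : ℝ := (h (x 0) - hstar + 1) / ‖g0‖ ^ 2 with ht
    have hd := hdesc (x 0) (x 0 - t • g0)
    have h1 : (x 0 - t • g0) - x 0 = -(t • g0) := sub_sub_cancel_left _ _
    have h2 : (inner ℝ g0 ((x 0 - t • g0) - x 0) : ℝ) = -(t * ‖g0‖ ^ 2) := by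
      rw [h1, inner_neg_right, real_inner_smul_right, real_inner_self_eq_norm_sq]
    have h3 : ‖(x 0 - t • g0) - x 0‖ ^ 2 = t ^ 2 * ‖g0‖ ^ 2 := by
      rw [h1, norm_neg, norm_smul, mul_pow, Real.norm_eq_abs, sq_abs]
    rw [h2, h3] at hd
    have hgsq : (0:ℝ) < ‖g0‖ ^ 2 := by positivity
    have htval : t * ‖g0‖ ^ 2 = h (x 0) - hstar + 1 := by
      rw [ht]; field_simp
    have hLhterm : Lh / 2 * (t ^ 2 * ‖g0‖ ^ 2) ≤ 0 := by
      have : (0:ℝ) ≤ t ^ 2 * ‖g0‖ ^ 2 := by positivity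
      nlinarith
    have := hlow (x 0 - t • g0)
    nlinarith
  have hLh0 : 0 ≤ Lh := le_of_lt hLhpos
  -- upper gradient bound
  have hub : ∀ z, ‖gradient h z‖ ^ 2 ≤ 2 * Lh * (h z - hstar) := by
    intro z
    set g := gradient h z with hg
    have hd := hdesc z (z - (1 / Lh) • g)
    have h1 : (z - (1 / Lh) • g) - z = -((1 / Lh) • g) := sub_sub_cancel_left _ _
    have h2 : (inner ℝ g ((z - (1 / Lh) • g) - z) : ℝ) = -((1 / Lh) * ‖g‖ ^ 2) := by
      rw [h1, inner_neg_right, real_inner_smul_right, real_inner_self_eq_norm_sq]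
    have h3 : ‖(z - (1 / Lh) • g) - z‖ ^ 2 = (1 / Lh) ^ 2 * ‖g‖ ^ 2 := by
      rw [h1, norm_neg, norm_smul, mul_pow, Real.norm_eq_abs, sq_abs]
    rw [h2, h3] at hd
    have hls := hlow (z - (1 / Lh) • g)
    have hLhne : Lh ≠ 0 := ne_of_gt hLhpos
    have hexp : (1 / Lh) * ‖g‖ ^ 2 - Lh / 2 * ((1 / Lh) ^ 2 * ‖g‖ ^ 2) = ‖g‖ ^ 2 / (2 * Lh) := by
      field_simp; ring
    have : hstar ≤ h z - ‖g‖ ^ 2 / (2 * Lh) := by linarith [hd, hls, hexp]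
    have h4 : ‖g‖ ^ 2 / (2 * Lh) ≤ h z - hstar := by linarith
    calc ‖g‖ ^ 2 = (‖g‖ ^ 2 / (2 * Lh)) * (2 * Lh) := by field_simp
      _ ≤ (h z - hstar) * (2 * Lh) := by
          exact mul_le_mul_of_nonneg_right h4 (by positivity)
      _ = 2 * Lh * (h z - hstar) := by ring
  have hΔnn : ∀ k, 0 ≤ h (x k) - hstar := fun k => sub_nonneg.mpr (hlow _)
  -- h (x 0) - hstar > 0 and μh ≤ Lh
  have hΔ0pos : 0 < h (x 0) - hstar := by
    have := hub (x 0)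
    nlinarith
  have hμLh : μh ≤ Lh := by
    have h1 := hPL (x 0)
    have h2 := hub (x 0)
    nlinarith
  have hMpos : 0 < M := lt_of_lt_of_le hL₀ (le_max_left _ _)
  have hμM : μh ≤ M := le_trans hμLh (le_max_right _ _)
  have hppos : 0 < p := by rw [hp]; positivity
  have hplt1 : p < 1 := by
    rw [hp]
    rw [div_lt_one (by positivity)]
    nlinarith
  have h1p0 : 0 < 1 - p := by linarith
  -- γ bounds
  have hγL₀ : ∀ k, L₀ ≤ γ (k + 1) := by
    intro k
    rw [hγ k]
    exact hL0 ▸ Finset.le_sup' L (Finset.mem_range.mpr (Nat.succ_pos k))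
  have hγpos : ∀ k, 0 < γ (k + 1) := fun k => lt_of_lt_of_le hL₀ (hγL₀ k)
  -- basic step facts
  have hδ : ∀ k, x (k + 1) - x k = -((1 / (2 * γ (k + 1))) • gradient h (x k)) := by
    intro k; rw [hx k]; exact sub_sub_cancel_left _ _
  have hδnorm2 : ∀ k, ‖x (k + 1) - x k‖ ^ 2
      = (1 / (2 * γ (k + 1))) ^ 2 * ‖gradient h (x k)‖ ^ 2 := by
    intro k; rw [hδ k, norm_neg, norm_smul, mul_pow, Real.norm_eq_abs, sq_abs]
  have hinner : ∀ k, (inner ℝ (gradient h (x k)) (x (k + 1) - x k) : ℝ)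
      = -((1 / (2 * γ (k + 1))) * ‖gradient h (x k)‖ ^ 2) := by
    intro k
    rw [hδ k, inner_neg_right, real_inner_smul_right, real_inner_self_eq_norm_sq]
  have hδn0 : ∀ k, ‖x (k + 1) - x k‖ ^ 2 ≠ 0 := by
    intro k
    rw [hδnorm2 k]
    have := hγpos k
    have := hg0
    have hgk : 0 < ‖gradient h (x k)‖ := norm_pos_iff.mpr (hgrad k)
    positivity
  have hδpos : ∀ k, 0 < ‖x (k + 1) - x k‖ ^ 2 := by
    intro k
    exact lt_of_le_of_ne (by positivity) (Ne.symm (hδn0 k))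
  -- exact identity
  have hident : ∀ k, h (x (k + 1)) = h (x k) - ‖gradient h (x k)‖ ^ 2 / (2 * γ (k + 1))
      + L (k + 1) * ‖gradient h (x k)‖ ^ 2 / (8 * γ (k + 1) ^ 2) := by
    intro k
    have e1 : L (k + 1) * ‖x (k + 1) - x k‖ ^ 2
        = 2 * (h (x (k + 1)) - h (x k)
          - (inner ℝ (gradient h (x k)) (x (k + 1) - x k) : ℝ)) := by
      rw [hL k, div_mul_cancel₀ _ (hδn0 k)]
    rw [hδnorm2 k, hinner k] at e1
    linear_combination (-(1/2) : ℝ) * e1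
  -- curvature upper bound
  have hLub : ∀ k, L (k + 1) ≤ Lh := by
    intro k
    have hd := hdesc (x k) (x (k + 1))
    rw [hL k, div_le_iff₀ (hδpos k)]
    linarith
  have hLjM : ∀ j, L j ≤ M := by
    intro j
    cases j with
    | zero => rw [hL0]; exact le_max_left _ _
    | succ n => exact le_trans (hLub n) (le_max_right _ _)
  have hγM : ∀ k, γ (k + 1) ≤ M := by
    intro k
    rw [hγ k]
    exact Finset.sup'_le _ _ fun j _ => hLjM j
  have hγmono : ∀ k, γ (k + 1) ≤ γ (k + 2) := by
    intro k
    rw [hγ k, hγ (k + 1)]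
    exact Finset.sup'_le _ _ fun j hj =>
      Finset.le_sup' L (Finset.mem_range.mpr (lt_trans (Finset.mem_range.mp hj) (Nat.lt_succ_self _)))
  have hLγ : ∀ k, L (k + 1) ≤ γ (k + 2) := by
    intro k
    rw [hγ (k + 1)]
    exact Finset.le_sup' L (Finset.self_mem_range_succ (k + 1))
  -- counting bad steps
  set b : ℕ → ℕ := fun k => ((Finset.range k).filter (fun j => (3 / 2 : ℝ) * γ (j + 1) < L (j + 1))).card with hb
  have hbsucc : ∀ k, b (k + 1) = if (3 / 2 : ℝ) * γ (k + 1) < L (k + 1) then b k + 1 else b k := by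
    intro k
    rw [hb]
    simp only [Finset.range_add_one, Finset.filter_insert]
    by_cases hc : (3 / 2 : ℝ) * γ (k + 1) < L (k + 1)
    · rw [if_pos hc, if_pos hc, Finset.card_insert_of_notMem (by simp)]
    · rw [if_neg hc, if_neg hc]
  have hble : ∀ k, b k ≤ k := by
    intro k
    calc b k ≤ (Finset.range k).card := Finset.card_filter_le _ _
      _ = k := Finset.card_range k
  have hγgrow : ∀ k, L₀ * (3 / 2) ^ (b k) ≤ γ (k + 1) := by
    intro k
    induction k with
    | zero => simpa [hb] using hγL₀ 0
    | succ n ih =>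
      rw [hbsucc n]
      by_cases hc : (3 / 2 : ℝ) * γ (n + 1) < L (n + 1)
      · rw [if_pos hc]
        have : L₀ * (3 / 2) ^ (b n + 1) = (3 / 2) * (L₀ * (3 / 2) ^ (b n)) := by ring
        rw [this]
        calc (3 / 2 : ℝ) * (L₀ * (3 / 2) ^ (b n)) ≤ (3 / 2) * γ (n + 1) := by nlinarith
          _ ≤ L (n + 1) := le_of_lt hc
          _ ≤ γ (n + 2) := hLγ n
      · rw [if_neg hc]
        exact le_trans ih (hγmono n)
  have hbmh : ∀ k, b k ≤ mh := by
    intro k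
    have h1 : L₀ * (3 / 2) ^ (b k) ≤ M := le_trans (hγgrow k) (hγM k)
    have h2 : ((3 : ℝ) / 2) ^ (b k) ≤ M / L₀ := by
      rw [le_div_iff₀ hL₀]
      nlinarith
    have h32 : (1 : ℝ) < 3 / 2 := by norm_num
    have h3 : ((b k : ℝ)) ≤ Real.logb (3 / 2) (M / L₀) := by
      have := Real.logb_le_logb_of_le h32 (by positivity) h2
      rwa [Real.logb_pow, Real.logb_self_eq_one h32, mul_one] at this
    have h4 : ((b k : ℝ)) ≤ (mh : ℕ) := by
      rw [hmh]
      exact le_trans h3 (Nat.le_ceil _)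
    exact_mod_cast h4
  -- Cbar nonneg and key Cbar bound
  have hCbar_nn : 0 ≤ Cbar := by
    rw [hCbar]
    have : (0:ℝ) ≤ μh / (4 * L₀) := by positivity
    exact le_trans this (le_trans (le_max_right _ _) (le_max_right _ _))
  have hCbar_key : Lh ^ 2 / (4 * L₀ ^ 2) ≤ Cbar := by
    rw [hCbar]
    have h1 : Lh ^ 2 / (4 * L₀ ^ 2) ≤ Lh ^ 3 / (4 * μh * L₀ ^ 2) := by
      rw [div_le_div_iff₀ (by positivity) (by positivity)]
      nlinarith [mul_nonneg (mul_nonneg (sub_nonneg.mpr hμLh) (sq_nonneg Lh)) (sq_nonneg L₀)]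
    exact le_trans h1 (le_trans (le_max_left _ _) (le_max_left _ _))
  -- good-step inequality
  have hgood : ∀ k, L (k + 1) ≤ (3 / 2) * γ (k + 1) →
      h (x (k + 1)) - hstar ≤ (1 - p) * (h (x k) - hstar) := by
    intro k hk
    have hγp := hγpos k
    have hγm := hγM k
    set n := ‖gradient h (x k)‖ ^ 2 with hn
    have hnnn : (0:ℝ) ≤ n := by positivity
    have hid := hident k
    have A1 : L (k + 1) * n / (8 * γ (k + 1) ^ 2)
        ≤ (3 / 2) * γ (k + 1) * n / (8 * γ (k + 1) ^ 2) := by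
      gcongr
    have A2 : (3 / 2) * γ (k + 1) * n / (8 * γ (k + 1) ^ 2) = 3 * n / (16 * γ (k + 1)) := by
      field_simp
      ring
    have E : -(n / (2 * γ (k + 1))) + 3 * n / (16 * γ (k + 1)) = -(5 * n / (16 * γ (k + 1))) := by
      field_simp
      ring
    have A3 : h (x (k + 1)) ≤ h (x k) - 5 * n / (16 * γ (k + 1)) := by
      rw [hid]
      linarith [A1, A2 ▸ A1, E]
    have hPLk := hPL (x k)
    have A4 : 5 * (2 * μh * (h (x k) - hstar)) / (16 * γ (k + 1)) ≤ 5 * n / (16 * γ (k + 1)) := by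
      gcongr
    have A4' : 5 * (2 * μh * (h (x k) - hstar)) / (16 * γ (k + 1))
        = (5 * μh / (8 * γ (k + 1))) * (h (x k) - hstar) := by
      field_simp
      ring
    have A5 : p ≤ 5 * μh / (8 * γ (k + 1)) := by
      rw [hp]
      have s1 : μh / (8 * M) ≤ μh / (8 * γ (k + 1)) := by
        gcongr
      have s2 : μh / (8 * γ (k + 1)) ≤ 5 * μh / (8 * γ (k + 1)) := by
        gcongr
        linarith
      exact le_trans s1 s2
    have A6 : p * (h (x k) - hstar) ≤ (5 * μh / (8 * γ (k + 1))) * (h (x k) - hstar) :=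
      mul_le_mul_of_nonneg_right A5 (hΔnn k)
    have := A4'.symm ▸ A4
    linarith [A3, A4, A4' ▸ A4, A6]
  -- bad-step inequality (always valid)
  have hbad : ∀ k, h (x (k + 1)) - hstar ≤ (1 + Cbar) * (h (x k) - hstar) := by
    intro k
    have hγp := hγpos k
    have hγl := hγL₀ k
    set n := ‖gradient h (x k)‖ ^ 2 with hn
    have hnnn : (0:ℝ) ≤ n := by positivity
    have hid := hident k
    have B1 : (0:ℝ) ≤ n / (2 * γ (k + 1)) := by positivity
    have B2 : L (k + 1) * n / (8 * γ (k + 1) ^ 2) ≤ Lh * n / (8 * γ (k + 1) ^ 2) := by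
      gcongr
      exact hLub k
    have B3a : Lh * n / (8 * γ (k + 1) ^ 2) ≤ Lh * n / (8 * L₀ ^ 2) := by
      gcongr
    have B3b : Lh * n / (8 * L₀ ^ 2) ≤ Lh * (2 * Lh * (h (x k) - hstar)) / (8 * L₀ ^ 2) := by
      gcongr
      exact hub (x k)
    have B4 : Lh * (2 * Lh * (h (x k) - hstar)) / (8 * L₀ ^ 2)
        = (Lh ^ 2 / (4 * L₀ ^ 2)) * (h (x k) - hstar) := by
      field_simp
      ring
    have B5 : (Lh ^ 2 / (4 * L₀ ^ 2)) * (h (x k) - hstar) ≤ Cbar * (h (x k) - hstar) :=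
      mul_le_mul_of_nonneg_right hCbar_key (hΔnn k)
    linarith [B2, B3a, B3b, B4 ▸ B3b, B5]
  -- main induction
  have hmain : ∀ k, h (x k) - hstar
      ≤ (1 + Cbar) ^ (b k) * (1 - p) ^ (k - b k) * (h (x 0) - hstar) := by
    intro k
    induction k with
    | zero => simp [hb]
    | succ n ih =>
      by_cases hc : (3 / 2 : ℝ) * γ (n + 1) < L (n + 1)
      · rw [hbsucc n, if_pos hc, Nat.succ_sub_succ, pow_succ]
        have step := hbad n
        calc h (x (n + 1)) - hstar ≤ (1 + Cbar) * (h (x n) - hstar) := step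
          _ ≤ (1 + Cbar) * ((1 + Cbar) ^ (b n) * (1 - p) ^ (n - b n) * (h (x 0) - hstar)) :=
              mul_le_mul_of_nonneg_left ih (by linarith)
          _ = (1 + Cbar) ^ (b n) * (1 + Cbar) * (1 - p) ^ (n - b n) * (h (x 0) - hstar) := by
              ring
      · rw [hbsucc n, if_neg hc, Nat.succ_sub (hble n), pow_succ]
        have step := hgood n (not_lt.mp hc)
        calc h (x (n + 1)) - hstar ≤ (1 - p) * (h (x n) - hstar) := step
          _ ≤ (1 - p) * ((1 + Cbar) ^ (b n) * (1 - p) ^ (n - b n) * (h (x 0) - hstar)) :=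
              mul_le_mul_of_nonneg_left ih (by linarith)
          _ = (1 + Cbar) ^ (b n) * ((1 - p) ^ (n - b n) * (1 - p)) * (h (x 0) - hstar) := by
              ring
  -- final assembly
  intro k
  have hm := hmain (k + 1)
  have HB := hbmh (k + 1)
  have HK := hble (k + 1)
  have hq : (1 : ℝ) - μh / (8 * M) = 1 - p := by rw [hp]
  rw [hq]
  set B := b (k + 1) with hBdef
  have coeff : (1 + Cbar) ^ B * (1 - p) ^ (k + 1 - B) ≤ Ch * (1 - p) ^ (k + 1) := by
    rw [hCh, div_mul_eq_mul_div, le_div_iff₀ (pow_pos h1p0 mh)]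
    have e : (1 - p) ^ (k + 1) = (1 - p) ^ (k + 1 - B) * (1 - p) ^ B := by
      rw [← pow_add, Nat.sub_add_cancel HK]
    rw [e]
    have c1 : (1 + Cbar) ^ B ≤ (1 + Cbar) ^ mh := pow_le_pow_right₀ (by linarith) HB
    have c2 : (1 - p) ^ mh ≤ (1 - p) ^ B := pow_le_pow_of_le_one (by linarith) (by linarith) HB
    have c3 : (1 + Cbar) ^ B * (1 - p) ^ mh ≤ (1 + Cbar) ^ mh * (1 - p) ^ B :=
      mul_le_mul c1 c2 (by positivity) (by positivity)
    calc (1 + Cbar) ^ B * (1 - p) ^ (k + 1 - B) * (1 - p) ^ mh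
        = ((1 + Cbar) ^ B * (1 - p) ^ mh) * (1 - p) ^ (k + 1 - B) := by ring
      _ ≤ ((1 + Cbar) ^ mh * (1 - p) ^ B) * (1 - p) ^ (k + 1 - B) :=
          mul_le_mul_of_nonneg_right c3 (by positivity)
      _ = (1 + Cbar) ^ mh * ((1 - p) ^ (k + 1 - B) * (1 - p) ^ B) := by ring
  calc h (x (k + 1)) - hstar
      ≤ (1 + Cbar) ^ B * (1 - p) ^ (k + 1 - B) * (h (x 0) - hstar) := hm
    _ ≤ Ch * (1 - p) ^ (k + 1) * (h (x 0) - hstar) :=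
        mul_le_mul_of_nonneg_right coeff (hΔnn 0)
end

section
/- Let h : ℝ^d → ℝ be differentiable with L_h-Lipschitz gradient, and let {x^k} be the AC-GM iterates with parameters α > 1, L_0 > 0, with ∇h(x^k) ≠ 0 for every k. Set β := (α+1)/2 and S̄ := {k ≥ 0 : L_{k+1} > β γ_{k+1}}. Then the cardinality of S̄ is at most m_h := ⌈log_β(max{L_0, L_h}/L_0)⌉₊, the smallest nonnegative integer greater than or equal to log_β(max{L_0, L_h}/L_0). -/
open intervalIntegral in
/-- Descent lemma: quadratic upper bound for a function with Lipschitz gradient. -/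
lemma acgm_descent {d : ℕ} (h : EuclideanSpace ℝ (Fin d) → ℝ)
    (hdiff : Differentiable ℝ h)
    (Lh : ℝ) (hLip : ∀ u v, ‖gradient h u - gradient h v‖ ≤ Lh * ‖u - v‖)
    (a b : EuclideanSpace ℝ (Fin d)) :
    h b - h a - (inner ℝ (gradient h a) (b - a) : ℝ) ≤ Lh / 2 * ‖b - a‖ ^ 2 := by
  set Δ := b - a with hΔ
  set ψ : ℝ → ℝ := fun t => (inner ℝ (gradient h (a + t • Δ)) Δ : ℝ) with hψ
  -- gradient is continuous
  have hgc : Continuous (gradient h) := by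
    have : LipschitzWith (Real.toNNReal (max Lh 0)) (gradient h) := by
      apply LipschitzWith.of_dist_le_mul
      intro u v
      rw [dist_eq_norm, dist_eq_norm, Real.coe_toNNReal']
      exact le_trans (hLip u v)
        (mul_le_mul_of_nonneg_right ((le_max_left Lh 0).trans (le_max_left _ _))
          (norm_nonneg _))
    exact this.continuous
  have hψc : Continuous ψ := by
    apply Continuous.inner
    · exact hgc.comp (by continuity)
    · exact continuous_const
  -- derivative of t ↦ h (a + t • Δ)
  have hder : ∀ t : ℝ, HasDerivAt (fun t : ℝ => h (a + t • Δ)) (ψ t) t := by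
    intro t
    have hc : HasDerivAt (fun t : ℝ => a + t • Δ) Δ t := by
      simpa using ((hasDerivAt_id t).smul_const Δ).const_add a
    have hg := (hdiff (a + t • Δ)).hasGradientAt.hasFDerivAt
    have := hg.comp_hasDerivAt t hc
    simpa [hψ, InnerProductSpace.toDual_apply_apply, Function.comp_def] using this
  have hFTC : ∫ t in (0:ℝ)..1, ψ t = h b - h a := by
    have := integral_eq_sub_of_hasDerivAt (f := fun t : ℝ => h (a + t • Δ))
      (f' := ψ) (a := 0) (b := 1) (fun t _ => hder t)
      (hψc.intervalIntegrable 0 1)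
    simpa [hΔ] using this
  have hψ0 : ψ 0 = (inner ℝ (gradient h a) Δ : ℝ) := by simp [hψ]
  -- pointwise bound
  have hbound : ∀ t ∈ Set.Icc (0:ℝ) 1, ψ t ≤ ψ 0 + (Lh * ‖Δ‖ ^ 2) * t := by
    intro t ht
    have h1 : ψ t - ψ 0 = (inner ℝ (gradient h (a + t • Δ) - gradient h a) Δ : ℝ) := by
      simp [hψ, inner_sub_left]
    have h2 : (inner ℝ (gradient h (a + t • Δ) - gradient h a) Δ : ℝ) ≤
        ‖gradient h (a + t • Δ) - gradient h a‖ * ‖Δ‖ := real_inner_le_norm _ _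
    have h3 : ‖gradient h (a + t • Δ) - gradient h a‖ ≤ Lh * (t * ‖Δ‖) := by
      have := hLip (a + t • Δ) a
      simpa [norm_smul, abs_of_nonneg ht.1] using this
    have h4 : ‖gradient h (a + t • Δ) - gradient h a‖ * ‖Δ‖ ≤ Lh * (t * ‖Δ‖) * ‖Δ‖ :=
      mul_le_mul_of_nonneg_right h3 (norm_nonneg _)
    nlinarith [norm_nonneg Δ]
  -- integrate the bound
  have hint : (∫ t in (0:ℝ)..1, ψ t) ≤ ∫ t in (0:ℝ)..1, (ψ 0 + (Lh * ‖Δ‖ ^ 2) * t) := by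
    apply integral_mono_on (by norm_num) (hψc.intervalIntegrable 0 1)
      (((continuous_const.add (continuous_const.mul continuous_id') : Continuous fun t : ℝ => ψ 0 + (Lh * ‖Δ‖ ^ 2) * t)).intervalIntegrable 0 1)
      hbound
  have hrhs : (∫ t in (0:ℝ)..1, (ψ 0 + (Lh * ‖Δ‖ ^ 2) * t)) =
      ψ 0 + Lh / 2 * ‖Δ‖ ^ 2 := by
    rw [integral_add (f := fun _ => ψ 0) (g := fun t => (Lh * ‖Δ‖ ^ 2) * t) (continuous_const.intervalIntegrable 0 1)
      (((continuous_const.mul continuous_id' : Continuous fun t : ℝ => (Lh * ‖Δ‖ ^ 2) * t)).intervalIntegrable 0 1),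
      integral_const_mul]
    simp [integral_id]
    ring
  rw [hFTC] at hint
  rw [hrhs] at hint
  rw [← hψ0]
  linarith

/-- bound on the number of "bad" AC-GM indices.
For AC-GM iterates of a function with `Lh`-Lipschitz gradient, the set
`S̄ = {k : L_{k+1} > β γ_{k+1}}` (`β = (α+1)/2`) is finite with at most
`m_h = ⌈log_β (max{L₀, Lh} / L₀)⌉₊` elements. -/
theorem acgm_bad_index_count
    {d : ℕ} (h : EuclideanSpace ℝ (Fin d) → ℝ) (hdiff : Differentiable ℝ h)
    (Lh : ℝ) (hLip : ∀ u v, ‖gradient h u - gradient h v‖ ≤ Lh * ‖u - v‖)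
    (α L₀ : ℝ) (hα : 1 < α) (hL₀ : 0 < L₀)
    (x : ℕ → EuclideanSpace ℝ (Fin d)) (L γ : ℕ → ℝ)
    (hL0 : L 0 = L₀)
    (hγ : ∀ k : ℕ, γ (k + 1) =
      (Finset.range (k + 1)).sup' (Finset.nonempty_range_iff.mpr (Nat.succ_ne_zero k)) L)
    (hx : ∀ k : ℕ, x (k + 1) = x k - (1 / (α * γ (k + 1))) • gradient h (x k))
    (hL : ∀ k : ℕ, L (k + 1) =
      2 * (h (x (k + 1)) - h (x k)
        - (inner ℝ (gradient h (x k)) (x (k + 1) - x k) : ℝ)) / ‖x (k + 1) - x k‖ ^ 2)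
    (hgrad : ∀ k : ℕ, gradient h (x k) ≠ 0) :
    {k : ℕ | ((α + 1) / 2) * γ (k + 1) < L (k + 1)}.Finite ∧
      {k : ℕ | ((α + 1) / 2) * γ (k + 1) < L (k + 1)}.ncard ≤
        ⌈Real.logb ((α + 1) / 2) (max L₀ Lh / L₀)⌉₊ := by
  classical
  set β : ℝ := (α + 1) / 2 with hβdef
  have hβ : 1 < β := by rw [hβdef]; linarith
  set M : ℝ := max L₀ Lh with hMdef
  set S : Set ℕ := {k : ℕ | β * γ (k + 1) < L (k + 1)} with hSdef
  set mh : ℕ := ⌈Real.logb β (M / L₀)⌉₊ with hmh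
  -- γ (k+1) ≥ L₀
  have hγL₀ : ∀ k : ℕ, L₀ ≤ γ (k + 1) := by
    intro k
    rw [hγ k, ← hL0]
    exact Finset.le_sup' L (Finset.mem_range.mpr (Nat.succ_pos k))
  -- γ monotone
  have hγmono : ∀ j k : ℕ, j ≤ k → γ (j + 1) ≤ γ (k + 1) := by
    intro j k hjk
    rw [hγ j, hγ k]
    apply Finset.sup'_le
    intro b hb
    exact Finset.le_sup' L (Finset.mem_range.mpr
      (lt_of_lt_of_le (Finset.mem_range.mp hb) (by omega)))
  -- step is nonzero
  have hstep : ∀ k : ℕ, x (k + 1) - x k ≠ 0 := by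
    intro k
    have hγpos : 0 < γ (k + 1) := lt_of_lt_of_le hL₀ (hγL₀ k)
    have hαγ : α * γ (k + 1) ≠ 0 := by positivity
    rw [hx k]
    rw [sub_sub_cancel_left]
    simp only [neg_ne_zero]
    exact smul_ne_zero (one_div_ne_zero hαγ) (hgrad k)
  -- L (k+1) ≤ Lh
  have hLle : ∀ k : ℕ, L (k + 1) ≤ Lh := by
    intro k
    have hnorm : (0:ℝ) < ‖x (k + 1) - x k‖ ^ 2 :=
      pow_pos (norm_pos_iff.mpr (hstep k)) 2
    rw [hL k, div_le_iff₀ hnorm]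
    have := acgm_descent h hdiff Lh hLip (x k) (x (k + 1))
    nlinarith
  -- γ (k+1) ≤ M
  have hγM : ∀ k : ℕ, γ (k + 1) ≤ M := by
    intro k
    rw [hγ k]
    apply Finset.sup'_le
    intro b _
    cases b with
    | zero => rw [hL0]; exact le_max_left _ _
    | succ j => exact le_trans (hLle j) (le_max_right _ _)
  -- bad step doubles (β-multiplies) γ
  have hbad : ∀ k : ℕ, k ∈ S → β * γ (k + 1) ≤ γ (k + 2) := by
    intro k hk
    have h1 : L (k + 1) ≤ γ (k + 2) := by
      rw [hγ (k + 1)]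
      exact Finset.le_sup' L (Finset.mem_range.mpr (by omega))
    exact le_trans (le_of_lt hk) h1
  set P : ℕ → Prop := fun j => β * γ (j + 1) < L (j + 1) with hP
  -- key growth estimate
  have key : ∀ k : ℕ, β ^ ((Finset.range k).filter P).card * L₀ ≤ γ (k + 1) := by
    intro k
    induction k with
    | zero => simpa using hγL₀ 0
    | succ k ih =>
      rw [Finset.range_add_one, Finset.filter_insert]
      by_cases hk : P k
      · rw [if_pos hk, Finset.card_insert_of_notMem (by simp)]
        have h1 : β ^ (((Finset.range k).filter P).card + 1) * L₀ =
            β * (β ^ ((Finset.range k).filter P).card * L₀) := by ring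
        rw [h1]
        calc β * (β ^ ((Finset.range k).filter P).card * L₀)
            ≤ β * γ (k + 1) := mul_le_mul_of_nonneg_left ih (by linarith)
          _ ≤ γ (k + 2) := hbad k hk
      · rw [if_neg hk]
        exact le_trans ih (hγmono k (k + 1) (by omega))
  -- card bound for initial segments
  have cardbound : ∀ k : ℕ, ((Finset.range k).filter P).card ≤ mh := by
    intro k
    set c : ℕ := ((Finset.range k).filter P).card with hc
    have h1 : β ^ c * L₀ ≤ M := le_trans (key k) (hγM k)
    have hM0 : 0 < M := lt_of_lt_of_le hL₀ (le_max_left _ _)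
    have h2 : β ^ c ≤ M / L₀ := (le_div_iff₀ hL₀).mpr h1
    have h3 : (c : ℝ) ≤ Real.logb β (M / L₀) := by
      have h4 : Real.logb β (β ^ c) ≤ Real.logb β (M / L₀) :=
        Real.logb_le_logb_of_le hβ (by positivity) h2
      rwa [Real.logb_pow, Real.logb_self_eq_one hβ, mul_one] at h4
    have h5 : (c : ℝ) ≤ (mh : ℝ) := le_trans h3 (Nat.le_ceil _)
    exact_mod_cast h5
  -- any finset inside S has card ≤ mh
  have finsetbound : ∀ T : Finset ℕ, ↑T ⊆ S → T.card ≤ mh := by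
    intro T hT
    have hsub : T ⊆ (Finset.range (T.sup id + 1)).filter P := by
      intro j hj
      rw [Finset.mem_filter, Finset.mem_range]
      refine ⟨by have := Finset.le_sup (f := id) hj; simp at this; omega, ?_⟩
      exact hT hj
    exact le_trans (Finset.card_le_card hsub) (cardbound _)
  have hfin : S.Finite := by
    by_contra hinf
    obtain ⟨T, hTS, hTcard⟩ := Set.Infinite.exists_subset_card_eq hinf (mh + 1)
    have := finsetbound T hTS
    omega
  refine ⟨hfin, ?_⟩
  calc S.ncard = hfin.toFinset.card := by
        rw [← Set.ncard_coe_finset, hfin.coe_toFinset]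
    _ ≤ mh := finsetbound _ (by rw [hfin.coe_toFinset])
end

section
/- Let h : ℝ^d → ℝ be differentiable and μ_h-PŁ (μ_h > 0) with attained infimum h*, and let {x^k} be AC-GM iterates with parameters α > 1, L_0 > 0, with ∇h(x^k) ≠ 0. Set β := (α+1)/2. If an index k satisfies L_{k+1} ≤ β γ_{k+1}, then h(x^k) − h(x^{k+1}) ≥ ((α−1)/(4α² γ_{k+1})) ‖∇h(x^k)‖², and consequently h(x^{k+1}) − h* ≤ (1 − μ_h(α−1)/(2α² γ_{k+1}))(h(x^k) − h*). -/
/-- AC-GM one-step descent on "good" indices.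
If `k` is an index with `L_{k+1} ≤ β γ_{k+1}` (`β = (α+1)/2`), then
`h(x^k) - h(x^{k+1}) ≥ ((α-1)/(4α²γ_{k+1})) ‖∇h(x^k)‖²` and consequently
`h(x^{k+1}) - h* ≤ (1 - μ_h(α-1)/(2α²γ_{k+1})) (h(x^k) - h*)`. -/
theorem acgm_good_step
    {d : ℕ} (h : EuclideanSpace ℝ (Fin d) → ℝ) (hdiff : Differentiable ℝ h)
    (μh : ℝ) (hμ : 0 < μh)
    (hstar : ℝ) (hlow : ∀ x, hstar ≤ h x) (hatt : ∃ x, h x = hstar)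
    (hPL : ∀ x, 2 * μh * (h x - hstar) ≤ ‖gradient h x‖ ^ 2)
    (α L₀ : ℝ) (hα : 1 < α) (hL₀ : 0 < L₀)
    (x : ℕ → EuclideanSpace ℝ (Fin d)) (L γ : ℕ → ℝ)
    (hL0 : L 0 = L₀)
    (hγ : ∀ k : ℕ, γ (k + 1) =
      (Finset.range (k + 1)).sup' (Finset.nonempty_range_iff.mpr (Nat.succ_ne_zero k)) L)
    (hx : ∀ k : ℕ, x (k + 1) = x k - (1 / (α * γ (k + 1))) • gradient h (x k))
    (hL : ∀ k : ℕ, L (k + 1) =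
      2 * (h (x (k + 1)) - h (x k)
        - (inner ℝ (gradient h (x k)) (x (k + 1) - x k) : ℝ)) / ‖x (k + 1) - x k‖ ^ 2)
    (hgrad : ∀ k : ℕ, gradient h (x k) ≠ 0)
    (k : ℕ) (hk : L (k + 1) ≤ ((α + 1) / 2) * γ (k + 1)) :
    (α - 1) / (4 * α ^ 2 * γ (k + 1)) * ‖gradient h (x k)‖ ^ 2 ≤ h (x k) - h (x (k + 1)) ∧
      h (x (k + 1)) - hstar ≤
        (1 - μh * (α - 1) / (2 * α ^ 2 * γ (k + 1))) * (h (x k) - hstar) := by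
  have hαpos : (0:ℝ) < α := by linarith
  have hγpos : 0 < γ (k + 1) := by
    rw [hγ k]
    refine lt_of_lt_of_le hL₀ ?_
    rw [← hL0]
    exact Finset.le_sup' L (Finset.mem_range.mpr (Nat.succ_pos k))
  set γk := γ (k + 1) with hγk
  set g := gradient h (x k) with hgdef
  set N := ‖g‖ ^ 2 with hNdef
  have hNpos : 0 < N := by
    rw [hNdef]
    exact pow_pos (norm_pos_iff.mpr (hgrad k)) 2
  have ht : 0 < α * γk := by positivity
  have hdiffeq : x (k + 1) - x k = -((1 / (α * γk)) • g) := by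
    rw [hx k, sub_sub_cancel_left]
  have hnorm : ‖x (k + 1) - x k‖ ^ 2 = (1 / (α * γk)) ^ 2 * N := by
    rw [hdiffeq, norm_neg, norm_smul, Real.norm_eq_abs, abs_of_pos (by positivity)]
    ring
  have hinner : (inner ℝ g (x (k + 1) - x k) : ℝ) = -((1 / (α * γk)) * N) := by
    rw [hdiffeq, inner_neg_right, real_inner_smul_right, real_inner_self_eq_norm_sq]
  have hnz : ‖x (k + 1) - x k‖ ^ 2 ≠ 0 := by rw [hnorm]; positivity
  have E : L (k + 1) * ((1 / (α * γk)) ^ 2 * N)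
      = 2 * (h (x (k + 1)) - h (x k) + (1 / (α * γk)) * N) := by
    have := hL k
    rw [eq_div_iff hnz] at this
    rw [hinner, hnorm] at this
    linarith [this]
  have hs2 : (0:ℝ) ≤ (1 / (α * γk)) ^ 2 * N := by positivity
  have hstep : h (x k) - h (x (k + 1))
      = (1 / (α * γk)) * N - L (k + 1) / 2 * ((1 / (α * γk)) ^ 2 * N) := by linarith
  have hbound : L (k + 1) / 2 * ((1 / (α * γk)) ^ 2 * N)
      ≤ ((α + 1) / 2) * γk / 2 * ((1 / (α * γk)) ^ 2 * N) := by
    apply mul_le_mul_of_nonneg_right _ hs2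
    linarith
  have key : (α - 1) / (4 * α ^ 2 * γk) * N ≤ h (x k) - h (x (k + 1)) := by
    have hineq : (α - 1) / (4 * α ^ 2 * γk) * N
        ≤ (1 / (α * γk)) * N - ((α + 1) / 2) * γk / 2 * ((1 / (α * γk)) ^ 2 * N) := by
      have hαne : α ≠ 0 := ne_of_gt hαpos
      have hγne : γk ≠ 0 := ne_of_gt hγpos
      have hrw : (1 / (α * γk)) * N - ((α + 1) / 2) * γk / 2 * ((1 / (α * γk)) ^ 2 * N)
          = (3 * α - 1) / (4 * α ^ 2 * γk) * N := by
        field_simp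
        ring
      rw [hrw]
      apply mul_le_mul_of_nonneg_right _ hNpos.le
      gcongr <;> first | positivity | linarith
    linarith
  refine ⟨key, ?_⟩
  have hD0 : 0 ≤ h (x k) - hstar := by linarith [hlow (x k)]
  have hPLk : 2 * μh * (h (x k) - hstar) ≤ N := hPL (x k)
  have hcnn : 0 ≤ (α - 1) / (4 * α ^ 2 * γk) :=
    div_nonneg (by linarith) (by positivity)
  have h2 : (α - 1) / (4 * α ^ 2 * γk) * (2 * μh * (h (x k) - hstar))
      ≤ (α - 1) / (4 * α ^ 2 * γk) * N := mul_le_mul_of_nonneg_left hPLk hcnn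
  have hid : (1 - μh * (α - 1) / (2 * α ^ 2 * γk)) * (h (x k) - hstar)
      = (h (x k) - hstar) - (α - 1) / (4 * α ^ 2 * γk) * (2 * μh * (h (x k) - hstar)) := by
    ring
  rw [hid]
  linarith
end

section
/- Let h : ℝ^d → ℝ be differentiable, let x^0 ∈ ℝ^d, b_0 > 0, and let {x^k, b_k} be the AdaGrad-Norm iterates b_{k+1}² = b_k² + ‖∇h(x^k)‖², x^{k+1} = x^k − (1/b_{k+1}) ∇h(x^k). Let ε > 0 and C ≥ b_0. If ‖∇h(x^k)‖ > ε for all 0 ≤ k ≤ K−1 and b_k ≤ C for all 0 ≤ k ≤ K, then b_K² ≥ b_0² (1 + ε²/C²)^K, and consequently K ≤ log(C²/b_0²)/log(1 + ε²/C²). -/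
/-- Stage-1 bound for AdaGrad-Norm.
If along the AdaGrad-Norm iteration `‖∇h(x^k)‖ > ε` for all `k < K` while `b_k ≤ C` for
all `k ≤ K` (with `C ≥ b₀`), then `b_K² ≥ b₀²(1 + ε²/C²)^K`, and consequently
`K ≤ log(C²/b₀²) / log(1 + ε²/C²)`. -/
theorem adagrad_stage_one_bound
    {n : ℕ} (h : EuclideanSpace ℝ (Fin n) → ℝ) (hdiff : Differentiable ℝ h)
    (b₀ : ℝ) (hb₀ : 0 < b₀)
    (x : ℕ → EuclideanSpace ℝ (Fin n)) (b : ℕ → ℝ)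
    (hb0 : b 0 = b₀)
    (hb : ∀ k : ℕ, b (k + 1) = Real.sqrt (b k ^ 2 + ‖gradient h (x k)‖ ^ 2))
    (hx : ∀ k : ℕ, x (k + 1) = x k - (1 / b (k + 1)) • gradient h (x k))
    (ε C : ℝ) (hε : 0 < ε) (hC : b₀ ≤ C)
    (K : ℕ)
    (hbig : ∀ k < K, ε < ‖gradient h (x k)‖)
    (hbound : ∀ k ≤ K, b k ≤ C) :
    b₀ ^ 2 * (1 + ε ^ 2 / C ^ 2) ^ K ≤ b K ^ 2 ∧
      (K : ℝ) ≤ Real.log (C ^ 2 / b₀ ^ 2) / Real.log (1 + ε ^ 2 / C ^ 2) := by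
  have hC0 : (0:ℝ) < C := lt_of_lt_of_le hb₀ hC
  have hsq : ∀ k : ℕ, b (k+1) ^ 2 = b k ^ 2 + ‖gradient h (x k)‖ ^ 2 := by
    intro k
    rw [hb k, Real.sq_sqrt]
    positivity
  -- main induction
  have key : ∀ k ≤ K, b₀ ^ 2 * (1 + ε ^ 2 / C ^ 2) ^ k ≤ b k ^ 2 := by
    intro k hk
    induction k with
    | zero => simp [hb0]
    | succ m ih =>
      have hm : m ≤ K := le_of_lt (Nat.lt_of_succ_le hk)
      have ih' := ih hm
      have hg : ε < ‖gradient h (x m)‖ := hbig m (Nat.lt_of_succ_le hk)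
      have hbm : b m ≤ C := hbound m hm
      have hbmnn : 0 ≤ b m := by
        cases m with
        | zero => rw [hb0]; exact hb₀.le
        | succ j => rw [hb j]; exact Real.sqrt_nonneg _
      have hstep : b m ^ 2 * (1 + ε ^ 2 / C ^ 2) ≤ b (m+1) ^ 2 := by
        rw [hsq m]
        have hbm2 : b m ^ 2 ≤ C ^ 2 := by nlinarith
        have h1 : b m ^ 2 * (ε ^ 2 / C ^ 2) ≤ ε ^ 2 := by
          rw [mul_div_assoc', div_le_iff₀ (by positivity)]
          nlinarith [sq_nonneg ε]
        nlinarith [sq_nonneg (‖gradient h (x m)‖ - ε)]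
      calc b₀ ^ 2 * (1 + ε ^ 2 / C ^ 2) ^ (m+1)
          = (b₀ ^ 2 * (1 + ε ^ 2 / C ^ 2) ^ m) * (1 + ε ^ 2 / C ^ 2) := by ring
        _ ≤ b m ^ 2 * (1 + ε ^ 2 / C ^ 2) := by
            apply mul_le_mul_of_nonneg_right ih'
            positivity
        _ ≤ b (m+1) ^ 2 := hstep
  refine ⟨key K le_rfl, ?_⟩
  have hbK : b K ^ 2 ≤ C ^ 2 := by
    have h1 := hbound K le_rfl
    have hnn : 0 ≤ b K := by
      cases K with
      | zero => rw [hb0]; exact hb₀.le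
      | succ j => rw [hb j]; exact Real.sqrt_nonneg _
    nlinarith
  have hpow : (1 + ε ^ 2 / C ^ 2) ^ K ≤ C ^ 2 / b₀ ^ 2 := by
    rw [le_div_iff₀ (by positivity)]
    nlinarith [key K le_rfl]
  have hlogpos : 0 < Real.log (1 + ε ^ 2 / C ^ 2) := by
    apply Real.log_pos
    have : 0 < ε ^ 2 / C ^ 2 := by positivity
    linarith
  rw [le_div_iff₀ hlogpos]
  calc (K : ℝ) * Real.log (1 + ε ^ 2 / C ^ 2)
      = Real.log ((1 + ε ^ 2 / C ^ 2) ^ K) := by rw [Real.log_pow]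
    _ ≤ Real.log (C ^ 2 / b₀ ^ 2) := Real.log_le_log (by positivity) hpow
end

section
/- For any finite sequence of nonnegative reals a_1, …, a_T with a_1 ≥ 1, it holds that Σ_{l=1}^{T} a_l / (Σ_{i=1}^{l} a_i) ≤ log(Σ_{l=1}^{T} a_l) + 1. -/
open scoped BigOperators

private lemma sum_ratio_aux (a : ℕ → ℝ) (ha1 : 1 ≤ a 1) :
    ∀ T, 1 ≤ T → (∀ l, 1 ≤ l → l ≤ T → 0 ≤ a l) →
    ∑ l ∈ Finset.Icc 1 T, a l / ∑ i ∈ Finset.Icc 1 l, a i ≤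
      Real.log (∑ l ∈ Finset.Icc 1 T, a l) + 1 := by
  intro T
  induction T with
  | zero => omega
  | succ T ih =>
    intro _ hnn
    rcases Nat.eq_or_lt_of_le (Nat.one_le_iff_ne_zero.mpr (Nat.succ_ne_zero T)) with h1 | h1
    · -- T + 1 = 1
      obtain rfl : T = 0 := by omega
      simp only [Finset.Icc_self, Finset.sum_singleton]
      have hpos : (0:ℝ) < a 1 := lt_of_lt_of_le one_pos ha1
      rw [div_self hpos.ne']
      have : (0:ℝ) ≤ Real.log (a 1) := Real.log_nonneg ha1
      linarith
    · have hT1 : 1 ≤ T := Nat.lt_succ_iff.mp h1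
      have hnn' : ∀ l, 1 ≤ l → l ≤ T → 0 ≤ a l := fun l h1 h2 => hnn l h1 (by omega)
      have IH := ih hT1 hnn'
      have hsplit : ∀ f : ℕ → ℝ, ∑ l ∈ Finset.Icc 1 (T+1), f l =
          (∑ l ∈ Finset.Icc 1 T, f l) + f (T+1) := fun f =>
        Finset.sum_Icc_succ_top (by omega) f
      set S := ∑ l ∈ Finset.Icc 1 T, a l with hS
      have hS1 : (1:ℝ) ≤ S := by
        calc (1:ℝ) ≤ a 1 := ha1
        _ ≤ S := Finset.single_le_sum (f := a) (fun i hi => by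
            simp only [Finset.mem_Icc] at hi; exact hnn' i hi.1 hi.2)
            (by simp [Finset.mem_Icc]; omega)
      have hSpos : (0:ℝ) < S := lt_of_lt_of_le one_pos hS1
      have haT : 0 ≤ a (T+1) := hnn (T+1) (by omega) le_rfl
      have hS'pos : (0:ℝ) < S + a (T+1) := by linarith
      have hSsum : ∑ i ∈ Finset.Icc 1 (T+1), a i = S + a (T+1) := hsplit a
      rw [hsplit (fun l => a l / ∑ i ∈ Finset.Icc 1 l, a i), hSsum]
      have key : a (T+1) / (S + a (T+1)) ≤ Real.log (S + a (T+1)) - Real.log S := by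
        have := Real.log_le_sub_one_of_pos (div_pos hSpos hS'pos)
        rw [Real.log_div hSpos.ne' hS'pos.ne'] at this
        have heq : S / (S + a (T+1)) - 1 = -(a (T+1) / (S + a (T+1))) := by
          field_simp
          ring
        linarith [this, heq ▸ this]
      rw [hSsum] at *
      linarith [IH, key]

/-- summation lemma, Ward et al. Lemma 3.2.
For nonnegative reals `a₁, …, a_T` with `a₁ ≥ 1`,
`Σ_{l=1}^T a_l / (Σ_{i=1}^l a_i) ≤ log(Σ_{l=1}^T a_l) + 1`. -/
theorem sum_ratio_le_log_add_one
    (T : ℕ) (hT : 1 ≤ T) (a : ℕ → ℝ)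
    (hnonneg : ∀ l, 1 ≤ l → l ≤ T → 0 ≤ a l) (ha1 : 1 ≤ a 1) :
    ∑ l ∈ Finset.Icc 1 T, a l / ∑ i ∈ Finset.Icc 1 l, a i ≤
      Real.log (∑ l ∈ Finset.Icc 1 T, a l) + 1 := by
  exact sum_ratio_aux a ha1 T hT hnonneg
end
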